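/- Let φ,ψ,θ:[0,∞)→[0,∞) be differentiable, and suppose there are constants c₇,c₉,c₁₀,c₁₉,K>0 and F,M>0 such that φ(t)≤KM and θ(t)≤KM for all t, ψ(0)≤M, and ∂_t ψ² + c₁₉ ψ² ≤ c₇ ε^{-1} M² (F² − ∂_t θ²) + c₇ F² for all t. Then there is a constant C depending only on c₇,c₁₉,K such that ψ(t) ≤ C max{ε^{-1/2} M², M} for all t≥0 (assuming F≤M). -/

import Mathlib

open Real

lemma gronwall_aux (c D : ℝ) (hc : 0 < c) (u : ℝ → ℝ)
    (hd : ∀ t : ℝ, 0 ≤ t → DifferentiableAt ℝ u t)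
    (hineq : ∀ t : ℝ, 0 ≤ t → deriv u t + c * u t ≤ c * D) :
    ∀ t : ℝ, 0 ≤ t → u t ≤ max (u 0) D := by
  set v : ℝ → ℝ := fun t => (u t - D) * Real.exp (c * t) with hv
  have hvd : ∀ t : ℝ, 0 ≤ t →
      HasDerivAt v (deriv u t * Real.exp (c * t) + (u t - D) * (Real.exp (c * t) * c)) t := by
    intro t ht
    have h := ((hd t ht).hasDerivAt.sub_const D).mul (((hasDerivAt_id t).const_mul c).exp)
    simp only [id, mul_one] at h
    exact h
  have hmono : AntitoneOn v (Set.Ici (0:ℝ)) := by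
    apply antitoneOn_of_deriv_nonpos (convex_Ici 0)
    · intro x hx
      exact ((hvd x hx).differentiableAt).continuousAt.continuousWithinAt
    · intro x hx
      rw [interior_Ici] at hx
      exact ((hvd x (le_of_lt hx)).differentiableAt).differentiableWithinAt
    · intro x hx
      rw [interior_Ici] at hx
      rw [(hvd x (le_of_lt hx)).deriv]
      have h1 := hineq x (le_of_lt hx)
      have h2 : (0:ℝ) < Real.exp (c * x) := Real.exp_pos _
      nlinarith
  intro t ht
  have hvt : (u t - D) * Real.exp (c * t) ≤ u 0 - D := by
    have h := hmono Set.self_mem_Ici ht ht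
    simpa [hv] using h
  have he1 : (1:ℝ) ≤ Real.exp (c * t) := by
    rw [Real.one_le_exp_iff]; positivity
  rcases le_total (u t) D with h | h
  · exact le_trans h (le_max_right _ _)
  · have h2 : u t - D ≤ u 0 - D := by nlinarith [hvt]
    exact le_trans (by linarith) (le_max_left (u 0) D)

set_option maxHeartbeats 1000000 in
theorem psi_bound (c₇ c₁₉ K : ℝ) (hc₇ : 0 < c₇) (hc₁₉ : 0 < c₁₉) (hK : 0 < K) :
    ∃ C : ℝ, 0 < C ∧
      ∀ (ε F M : ℝ) (φ ψ θ : ℝ → ℝ),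
        0 < ε → ε < 1 → 0 < F → 0 < M → F ≤ M →
        (∀ t : ℝ, 0 ≤ t → 0 ≤ φ t ∧ 0 ≤ ψ t ∧ 0 ≤ θ t) →
        (∀ t : ℝ, 0 ≤ t → DifferentiableAt ℝ (fun s => ψ s ^ 2) t ∧
          DifferentiableAt ℝ (fun s => θ s ^ 2) t) →
        (∀ t : ℝ, 0 ≤ t → φ t ≤ K * M ∧ θ t ≤ K * M) →
        ψ 0 ≤ M →
        (∀ t : ℝ, 0 ≤ t →
          deriv (fun s => ψ s ^ 2) t + c₁₉ * ψ t ^ 2 ≤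
            c₇ * ε⁻¹ * M ^ 2 * (F ^ 2 - deriv (fun s => θ s ^ 2) t) + c₇ * F ^ 2) →
        ∀ t : ℝ, 0 ≤ t →
          ψ t ≤ C * max (ε ^ (-(1 : ℝ) / 2) * M ^ 2) M := by
  set C₀ : ℝ := 1 + c₇ * K ^ 2 + c₇ * (2 + c₁₉ * K ^ 2) / c₁₉ with hC₀
  have hC₀pos : 0 < C₀ := by positivity
  refine ⟨Real.sqrt C₀, Real.sqrt_pos.mpr hC₀pos, ?_⟩
  intro ε F M φ ψ θ hε hε1 hF hM hFM hnn hdiff hbd hψ0 hODE t ht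
  set a : ℝ := c₇ * ε⁻¹ * M ^ 2 with ha
  have hapos : 0 < a := by positivity
  set u : ℝ → ℝ := fun s => ψ s ^ 2 + a * θ s ^ 2 with hu
  set D : ℝ := (a * (F ^ 2 + c₁₉ * K ^ 2 * M ^ 2) + c₇ * F ^ 2) / c₁₉ with hD
  have hud : ∀ s : ℝ, 0 ≤ s → HasDerivAt u
      (deriv (fun r => ψ r ^ 2) s + a * deriv (fun r => θ r ^ 2) s) s := by
    intro s hs
    exact (hdiff s hs).1.hasDerivAt.add ((hdiff s hs).2.hasDerivAt.const_mul a)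
  have key : u t ≤ max (u 0) D := by
    apply gronwall_aux c₁₉ D hc₁₉ u
      (fun s hs => (hud s hs).differentiableAt) _ t ht
    intro s hs
    rw [(hud s hs).deriv]
    have h1 := hODE s hs
    have h2 := (hbd s hs).2
    have h3 := (hnn s hs).2.2
    have hθ2 : θ s ^ 2 ≤ K ^ 2 * M ^ 2 := by nlinarith
    have : c₁₉ * D = a * (F ^ 2 + c₁₉ * K ^ 2 * M ^ 2) + c₇ * F ^ 2 := by
      rw [hD, mul_div_assoc', mul_div_cancel_left₀ _ hc₁₉.ne']
    rw [this]
    simp only [hu]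
    nlinarith [h1, mul_le_mul_of_nonneg_left hθ2 (mul_nonneg hc₁₉.le hapos.le)]
  -- bound the RHS
  set X : ℝ := max (ε ^ (-(1 : ℝ) / 2) * M ^ 2) M with hX
  have hXM : M ≤ X := le_max_right _ _
  have hXpos : 0 < X := lt_of_lt_of_le hM hXM
  have hr : ε ^ (-(1 : ℝ) / 2) * M ^ 2 ≤ X := le_max_left _ _
  have hrpow : (ε ^ (-(1 : ℝ) / 2)) ^ 2 = ε⁻¹ := by
    rw [← Real.rpow_natCast (ε ^ (-(1 : ℝ) / 2)) 2, ← Real.rpow_mul hε.le]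
    norm_num [Real.rpow_neg_one]
  have hrnn : 0 ≤ ε ^ (-(1 : ℝ) / 2) * M ^ 2 := by positivity
  have hX2a : ε⁻¹ * M ^ 4 ≤ X ^ 2 := by
    have : (ε ^ (-(1 : ℝ) / 2) * M ^ 2) ^ 2 ≤ X ^ 2 := by
      apply pow_le_pow_left₀ hrnn hr
    calc ε⁻¹ * M ^ 4 = (ε ^ (-(1 : ℝ) / 2) * M ^ 2) ^ 2 := by
          rw [mul_pow, hrpow]; ring
      _ ≤ X ^ 2 := this
  have hX2b : M ^ 2 ≤ X ^ 2 := pow_le_pow_left₀ hM.le hXM 2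
  have hεinv : (0:ℝ) < ε⁻¹ := by positivity
  -- u 0 ≤ (1 + c₇K²) X²
  have hu0 : u 0 ≤ (1 + c₇ * K ^ 2) * X ^ 2 := by
    have h1 := (hbd 0 le_rfl).2
    have h2 := (hnn 0 le_rfl).2.2
    have h3 := (hnn 0 le_rfl).2.1
    have hθ2 : θ 0 ^ 2 ≤ K ^ 2 * M ^ 2 := by nlinarith
    have hψ2' : ψ 0 ^ 2 ≤ M ^ 2 := by nlinarith
    have h4 : a * θ 0 ^ 2 ≤ a * (K ^ 2 * M ^ 2) :=
      mul_le_mul_of_nonneg_left hθ2 hapos.le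
    rw [ha] at h4
    have h5 := mul_le_mul_of_nonneg_left hX2a (by positivity : (0:ℝ) ≤ c₇ * K ^ 2)
    show ψ 0 ^ 2 + a * θ 0 ^ 2 ≤ _
    rw [ha]
    nlinarith [h4, h5, hψ2', hX2b]
  have hDle : D ≤ (c₇ * (2 + c₁₉ * K ^ 2) / c₁₉) * X ^ 2 := by
    rw [hD, div_le_iff₀ hc₁₉, ha]
    have hF2 : F ^ 2 ≤ M ^ 2 := by nlinarith
    have h1 : c₇ * ε⁻¹ * M ^ 2 * (F ^ 2 + c₁₉ * K ^ 2 * M ^ 2)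
        ≤ c₇ * (1 + c₁₉ * K ^ 2) * (ε⁻¹ * M ^ 4) := by nlinarith
    have h2 : c₇ * F ^ 2 ≤ c₇ * X ^ 2 := by nlinarith
    have : c₇ * (1 + c₁₉ * K ^ 2) * (ε⁻¹ * M ^ 4) ≤ c₇ * (1 + c₁₉ * K ^ 2) * X ^ 2 := by
      apply mul_le_mul_of_nonneg_left hX2a; positivity
    calc c₇ * ε⁻¹ * M ^ 2 * (F ^ 2 + c₁₉ * K ^ 2 * M ^ 2) + c₇ * F ^ 2
        ≤ c₇ * (1 + c₁₉ * K ^ 2) * X ^ 2 + c₇ * X ^ 2 := by linarith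
      _ = c₇ * (2 + c₁₉ * K ^ 2) / c₁₉ * X ^ 2 * c₁₉ := by field_simp; ring
  have hψ2 : ψ t ^ 2 ≤ C₀ * X ^ 2 := by
    have h3 := (hnn t ht).2.2
    have huψ : ψ t ^ 2 ≤ u t := by simp only [hu]; nlinarith
    have hmax : max (u 0) D ≤ C₀ * X ^ 2 := by
      have hp1 : (0:ℝ) < c₇ * (2 + c₁₉ * K ^ 2) / c₁₉ := by positivity
      have hp2 : (0:ℝ) < 1 + c₇ * K ^ 2 := by positivity
      apply max_le
      · refine le_trans hu0 (mul_le_mul_of_nonneg_right ?_ (sq_nonneg X))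
        rw [hC₀]; linarith
      · refine le_trans hDle (mul_le_mul_of_nonneg_right ?_ (sq_nonneg X))
        rw [hC₀]; linarith
    linarith [le_trans key hmax]
  -- conclude
  have hψnn := (hnn t ht).2.1
  have hCX : 0 < Real.sqrt C₀ * X := by positivity
  have hCsq : (Real.sqrt C₀) ^ 2 = C₀ := Real.sq_sqrt hC₀pos.le
  nlinarith [hψ2, hψnn, hCX, hCsq, sq_nonneg (Real.sqrt C₀ * X - ψ t)]
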